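/- arXiv:2411.03611 — 2 statements merged into one kernel-verified Lean document; each statement's English description precedes it below -/
import Mathlib

section
/- (Duality formula) For a reference finite measure γ on ℝ^d and a probability measure μ, the functional E(μ) = ∫ φ(dμ/dγ) dγ satisfies E(μ) = sup over bounded continuous S*: ℝ^d → ℝ of { ∫ S* dμ − ∫ φ*(S*) dγ }, where φ* is the Legendre conjugate of φ. -/
open Set MeasureTheory BoundedContinuousFunction


open Set MeasureTheory BoundedContinuousFunction

private lemma slope_symm (f : ℝ → ℝ) (a b : ℝ) :
    (f a - f b) / (a - b) = (f b - f a) / (b - a) := by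
  rw [← neg_div_neg_eq, neg_sub, neg_sub]

section PhiLemmas

variable {φ : ℝ → ℝ} {φstar : ℝ → ℝ}

private lemma phi_bdd (hφnn : ∀ s ∈ Ici (0:ℝ), 0 ≤ φ s)
    (hφsuper : Filter.Tendsto (fun s => φ s / s) Filter.atTop Filter.atTop) (y : ℝ) :
    BddAbove (Set.range fun s : Ici (0:ℝ) => (s : ℝ) * y - φ (s : ℝ)) := by
  obtain ⟨M, hM⟩ := (hφsuper.eventually_ge_atTop |y|).exists_forall_of_atTop
  refine ⟨max M 1 * |y|, ?_⟩
  rintro z ⟨s, rfl⟩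
  rcases le_total (s : ℝ) (max M 1) with hs | hs
  · have h1 : (s : ℝ) * y ≤ (s : ℝ) * |y| := by
      have := s.2
      simp only [mem_Ici] at this
      exact mul_le_mul_of_nonneg_left (le_abs_self y) this
    have h2 : (s : ℝ) * |y| ≤ max M 1 * |y| :=
      mul_le_mul_of_nonneg_right hs (abs_nonneg y)
    have h3 : 0 ≤ φ (s : ℝ) := hφnn _ s.2
    simp only
    linarith
  · have hs1 : (1:ℝ) ≤ (s:ℝ) := le_trans (le_max_right M 1) hs
    have hs0 : (0:ℝ) < (s:ℝ) := lt_of_lt_of_le one_pos hs1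
    have h1 : |y| ≤ φ (s:ℝ) / (s:ℝ) := hM _ (le_trans (le_max_left M 1) hs)
    have h2 : (s:ℝ) * |y| ≤ φ (s:ℝ) := by
      rw [le_div_iff₀ hs0] at h1
      linarith [h1]
    have h3 : (s:ℝ) * y ≤ (s:ℝ) * |y| :=
      mul_le_mul_of_nonneg_left (le_abs_self y) hs0.le
    have h4 : (0:ℝ) ≤ max M 1 * |y| :=
      mul_nonneg (le_trans zero_le_one (le_max_right M 1)) (abs_nonneg y)
    simp only
    linarith

private lemma young_ineq (hφnn : ∀ s ∈ Ici (0:ℝ), 0 ≤ φ s)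
    (hφsuper : Filter.Tendsto (fun s => φ s / s) Filter.atTop Filter.atTop)
    (hφstar : ∀ y : ℝ, φstar y = ⨆ s : Ici (0:ℝ), ((s : ℝ) * y - φ (s : ℝ)))
    {s : ℝ} (hs : 0 ≤ s) (y : ℝ) : s * y - φ s ≤ φstar y := by
  rw [hφstar]
  exact le_ciSup (phi_bdd hφnn hφsuper y) ⟨s, hs⟩

private lemma phistar_mono (hφnn : ∀ s ∈ Ici (0:ℝ), 0 ≤ φ s)
    (hφsuper : Filter.Tendsto (fun s => φ s / s) Filter.atTop Filter.atTop)
    (hφstar : ∀ y : ℝ, φstar y = ⨆ s : Ici (0:ℝ), ((s : ℝ) * y - φ (s : ℝ))) :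
    Monotone φstar := by
  intro a b hab
  haveI : Nonempty (Ici (0:ℝ)) := ⟨⟨0, mem_Ici.2 le_rfl⟩⟩
  rw [hφstar a]
  refine ciSup_le fun s => ?_
  have hs : (0:ℝ) ≤ (s:ℝ) := s.2
  have h1 : (s:ℝ) * a ≤ (s:ℝ) * b := mul_le_mul_of_nonneg_left hab hs
  have h2 := young_ineq hφnn hφsuper hφstar hs b
  linarith

private lemma phistar_convex (hφnn : ∀ s ∈ Ici (0:ℝ), 0 ≤ φ s)
    (hφsuper : Filter.Tendsto (fun s => φ s / s) Filter.atTop Filter.atTop)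
    (hφstar : ∀ y : ℝ, φstar y = ⨆ s : Ici (0:ℝ), ((s : ℝ) * y - φ (s : ℝ))) :
    ConvexOn ℝ univ φstar := by
  haveI : Nonempty (Ici (0:ℝ)) := ⟨⟨0, mem_Ici.2 le_rfl⟩⟩
  refine ⟨convex_univ, fun y1 _ y2 _ a b ha hb hab => ?_⟩
  rw [hφstar (a • y1 + b • y2)]
  refine ciSup_le fun s => ?_
  have hs : (0:ℝ) ≤ (s:ℝ) := s.2
  have h1 := young_ineq hφnn hφsuper hφstar hs y1
  have h2 := young_ineq hφnn hφsuper hφstar hs y2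
  have e : (s:ℝ) * (a • y1 + b • y2) - φ s
      = a * ((s:ℝ) * y1 - φ s) + b * ((s:ℝ) * y2 - φ s) := by
    simp only [smul_eq_mul]
    linear_combination (φ (s:ℝ)) * hab
  rw [e]
  simp only [smul_eq_mul]
  have h3 : a * ((s:ℝ) * y1 - φ s) ≤ a * φstar y1 := mul_le_mul_of_nonneg_left h1 ha
  have h4 : b * ((s:ℝ) * y2 - φ s) ≤ b * φstar y2 := mul_le_mul_of_nonneg_left h2 hb
  linarith

private lemma phistar_lip (hφnn : ∀ s ∈ Ici (0:ℝ), 0 ≤ φ s)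
    (hφsuper : Filter.Tendsto (fun s => φ s / s) Filter.atTop Filter.atTop)
    (hφstar : ∀ y : ℝ, φstar y = ⨆ s : Ici (0:ℝ), ((s : ℝ) * y - φ (s : ℝ)))
    {M a b : ℝ} (hab : a ≤ b) (hbM : b ≤ M) :
    φstar b - φstar a ≤ (φstar (M+1) - φstar M) * (b - a) := by
  rcases eq_or_lt_of_le hab with rfl | hab'
  · simp
  have hconv := phistar_convex hφnn hφsuper hφstar
  have haM : a < M + 1 := by linarith
  have h1 : (φstar b - φstar a) / (b - a) ≤ (φstar (M+1) - φstar a) / (M+1 - a) :=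
    hconv.secant_mono (mem_univ a) (mem_univ b) (mem_univ (M+1))
      (ne_of_gt hab') (ne_of_gt haM) (by linarith)
  have h2 : (φstar a - φstar (M+1)) / (a - (M+1)) ≤ (φstar M - φstar (M+1)) / (M - (M+1)) :=
    hconv.secant_mono (mem_univ (M+1)) (mem_univ a) (mem_univ M)
      (ne_of_lt haM) (by linarith) (by linarith)
  rw [slope_symm (fun t => φstar t) a (M+1), slope_symm (fun t => φstar t) M (M+1)] at h2
  have e : (φstar (M+1) - φstar M) / (M + 1 - M) = φstar (M+1) - φstar M := by
    norm_num
  rw [e] at h2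
  have h3 : (φstar b - φstar a) / (b - a) ≤ φstar (M+1) - φstar M := le_trans h1 h2
  rwa [div_le_iff₀ (by linarith : (0:ℝ) < b - a)] at h3

end PhiLemmas

section Biconj
variable {φ : ℝ → ℝ} {φstar : ℝ → ℝ}

private lemma slope_symm' (f : ℝ → ℝ) (a b : ℝ) :
    (f a - f b) / (a - b) = (f b - f a) / (b - a) := by
  rw [← neg_div_neg_eq, neg_sub, neg_sub]

private lemma biconj_real (hφnn : ∀ s ∈ Ici (0:ℝ), 0 ≤ φ s)
    (hφconv : ConvexOn ℝ (Ici 0) φ) (hφlsc : LowerSemicontinuousOn φ (Ici 0))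
    (hφstar : ∀ y : ℝ, φstar y = ⨆ s : Ici (0:ℝ), ((s : ℝ) * y - φ (s : ℝ)))
    {s : ℝ} (hs : 0 ≤ s) {ε : ℝ} (hε : 0 < ε) :
    ∃ y : ℝ, φ s - ε ≤ s * y - φstar y := by
  haveI : Nonempty (Ici (0:ℝ)) := ⟨⟨0, mem_Ici.2 le_rfl⟩⟩
  rcases eq_or_lt_of_le hs with rfl | hs'
  · -- s = 0
    have hlsc := hφlsc 0 (mem_Ici.2 le_rfl) (φ 0 - ε/2) (by linarith)
    rw [eventually_nhdsWithin_iff, Metric.eventually_nhds_iff] at hlsc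
    obtain ⟨δ, hδ, hball⟩ := hlsc
    set y := min 0 ((ε - φ 0)/δ) with hy
    refine ⟨y, ?_⟩
    have hkey : φstar y ≤ ε - φ 0 := by
      rw [hφstar]
      refine ciSup_le fun t => ?_
      have ht : (0:ℝ) ≤ (t:ℝ) := t.2
      have hy0 : y ≤ 0 := min_le_left _ _
      have hφ0 : 0 ≤ φ 0 := hφnn 0 (mem_Ici.2 le_rfl)
      have hφt : 0 ≤ φ (t:ℝ) := hφnn _ t.2
      rcases lt_or_ge (t:ℝ) δ with hlt | hge
      · have hd : dist (t:ℝ) 0 < δ := by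
          rw [Real.dist_eq, sub_zero, abs_of_nonneg ht]; exact hlt
        have h1 : φ 0 - ε/2 < φ (t:ℝ) := hball hd t.2
        have h2 : (t:ℝ) * y ≤ 0 := mul_nonpos_of_nonneg_of_nonpos ht hy0
        linarith
      · have h2 : (t:ℝ) * y ≤ δ * y := by
          nlinarith [mul_nonpos_of_nonneg_of_nonpos (by linarith : (0:ℝ) ≤ (t:ℝ) - δ) hy0]
        have h3 : δ * y ≤ δ * ((ε - φ 0)/δ) :=
          mul_le_mul_of_nonneg_left (min_le_right _ _) hδ.le
        have h4 : δ * ((ε - φ 0)/δ) = ε - φ 0 := by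
          field_simp
        nlinarith
    have hz : (0:ℝ) * y = 0 := zero_mul y
    linarith
  · -- 0 < s
    set L := φ (s+1) - φ s with hL
    have hsmem : s ∈ Ici (0:ℝ) := hs
    have hs2 : (0:ℝ) < s/2 := by linarith
    have hy0L : (φ s - φ (s/2)) / (s/2) ≤ L := by
      have := hφconv.slope_mono_adjacent (mem_Ici.2 hs2.le) (mem_Ici.2 (by linarith : (0:ℝ) ≤ s+1))
        (by linarith : s/2 < s) (by linarith : s < s+1)
      rw [show s - s/2 = s/2 by ring, show s+1-s = 1 by ring, div_one] at this
      exact this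
    set y0 := (φ s - φ (s/2)) / (s/2) with hy0def
    set C := L - y0 with hCdef
    have hC0 : 0 ≤ C := by rw [hCdef]; linarith
    set h := min (s/2) (ε/(C+1)) with hhdef
    have hh0 : 0 < h := lt_min hs2 (by positivity)
    have hhs2 : h ≤ s/2 := min_le_left _ _
    have hsh0 : 0 < s - h := by linarith
    have hshlt : s - h < s := by linarith
    set y := (φ s - φ (s - h)) / h with hydef
    have hCh : C * h ≤ ε := by
      have h1 : h ≤ ε/(C+1) := min_le_right _ _
      have h2 : C * h ≤ C * (ε/(C+1)) := mul_le_mul_of_nonneg_left h1 hC0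
      have h3 : C * (ε/(C+1)) ≤ ε := by
        rw [mul_div_assoc']
        rw [div_le_iff₀ (by linarith : (0:ℝ) < C + 1)]
        nlinarith
      exact le_trans h2 h3
    -- y0 ≤ y
    have hy0y : y0 ≤ y := by
      rcases eq_or_lt_of_le hhs2 with heq | hlt2
      · rw [hydef, hy0def, heq]
        rw [show s - s/2 = s/2 by ring]
      · have hlt3 : s/2 < s - h := by linarith
        have := hφconv.secant_mono (mem_Ici.2 hs) (mem_Ici.2 hs2.le) (mem_Ici.2 hsh0.le)
          (by linarith : s/2 ≠ s) (by linarith : s - h ≠ s) (by linarith : s/2 ≤ s - h)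
        rw [slope_symm' φ (s/2) s, slope_symm' φ (s-h) s] at this
        rw [show s - (s - h) = h by ring, show s - s/2 = s/2 by ring] at this
        exact this
    -- y ≤ L
    have hyL : y ≤ L := by
      have := hφconv.slope_mono_adjacent (mem_Ici.2 hsh0.le)
        (mem_Ici.2 (by linarith : (0:ℝ) ≤ s+1)) hshlt (by linarith : s < s+1)
      rw [show s - (s - h) = h by ring, show s+1-s = 1 by ring, div_one] at this
      exact this
    refine ⟨y, ?_⟩
    have hkey : φstar y ≤ s * y - φ s + ε := by
      rw [hφstar]
      refine ciSup_le fun t => ?_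
      have ht : (0:ℝ) ≤ (t:ℝ) := t.2
      rcases lt_or_ge (t:ℝ) s with h1 | h1
      · rcases le_or_gt (t:ℝ) (s - h) with h2 | h2
        · -- t ≤ s - h : slope(t,s) ≤ y
          have hslope : (φ s - φ (t:ℝ)) / (s - (t:ℝ)) ≤ y := by
            rcases eq_or_lt_of_le h2 with heq | hlt2
            · rw [heq, show s - (s - h) = h by ring]
            · have := hφconv.secant_mono (mem_Ici.2 hs) t.2 (mem_Ici.2 hsh0.le)
                (by linarith : (t:ℝ) ≠ s) (by linarith : s - h ≠ s) (by linarith : (t:ℝ) ≤ s - h)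
              rw [slope_symm' φ (t:ℝ) s, slope_symm' φ (s-h) s,
                show s - (s - h) = h by ring] at this
              exact this
          rw [div_le_iff₀ (by linarith : (0:ℝ) < s - (t:ℝ))] at hslope
          nlinarith
        · -- s - h < t < s
          have hslopeL : (φ s - φ (t:ℝ)) / (s - (t:ℝ)) ≤ L := by
            have := hφconv.slope_mono_adjacent t.2
              (mem_Ici.2 (by linarith : (0:ℝ) ≤ s+1)) h1 (by linarith : s < s+1)
            rw [show s+1-s = 1 by ring, div_one] at this
            exact this
          have hslopey : y ≤ (φ s - φ (t:ℝ)) / (s - (t:ℝ)) := by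
            have := hφconv.secant_mono (mem_Ici.2 hs) (mem_Ici.2 hsh0.le) t.2
              (by linarith : s - h ≠ s) (by linarith : (t:ℝ) ≠ s) (by linarith : s - h ≤ (t:ℝ))
            rw [slope_symm' φ (t:ℝ) s, slope_symm' φ (s-h) s,
              show s - (s - h) = h by ring] at this
            exact this
          have hst : (0:ℝ) < s - (t:ℝ) := by linarith
          set sl := (φ s - φ (t:ℝ)) / (s - (t:ℝ)) with hsl
          have e2 : (sl - y) * (s - (t:ℝ)) = (φ s - φ (t:ℝ)) - y * (s - (t:ℝ)) := by
            rw [sub_mul, hsl, div_mul_cancel₀ _ (ne_of_gt hst)]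
          have hbound : (sl - y) * (s - (t:ℝ)) ≤ C * h := by
            have hfac1 : sl - y ≤ C := by rw [hCdef]; linarith
            have hfac2 : s - (t:ℝ) ≤ h := by linarith
            have hfac3 : 0 ≤ sl - y := by linarith
            exact mul_le_mul hfac1 hfac2 hst.le hC0
          nlinarith
      · rcases eq_or_lt_of_le h1 with heq | hlt
        · rw [← heq]; linarith
        · have hslope : y ≤ (φ (t:ℝ) - φ s) / ((t:ℝ) - s) := by
            have := hφconv.slope_mono_adjacent (mem_Ici.2 hsh0.le) t.2 hshlt hlt
            rw [show s - (s - h) = h by ring] at this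
            exact this
          rw [le_div_iff₀ (by linarith : (0:ℝ) < (t:ℝ) - s)] at hslope
          nlinarith
    linarith
end Biconj


section R
variable {φ : ℝ → ℝ} {φstar : ℝ → ℝ}

private lemma phistar_mono' (hφnn : ∀ s ∈ Ici (0:ℝ), 0 ≤ φ s)
    (hφstar : ∀ y : ℝ, φstar y = ⨆ s : Ici (0:ℝ), ((s : ℝ) * y - φ (s : ℝ)))
    (hM : Monotone φstar)
    (hbiconj : ∀ s : ℝ, 0 ≤ s → ∀ ε : ℝ, 0 < ε → ∃ y : ℝ, φ s - ε ≤ s * y - φstar y)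
    {s : ℝ} (hs : 0 ≤ s) {ε : ℝ} (hε : 0 < ε) :
    ∃ q : ℚ, φ s - ε ≤ s * (q:ℝ) - φstar (q:ℝ) := by
  obtain ⟨y, hy⟩ := hbiconj s hs (ε/2) (by linarith)
  have hδ : (0:ℝ) < ε/(2*(s+1)) := by positivity
  obtain ⟨q, hq1, hq2⟩ := exists_rat_btwn (show y - ε/(2*(s+1)) < y by linarith)
  refine ⟨q, ?_⟩
  have hm : φstar (q:ℝ) ≤ φstar y := hM hq2.le
  have h1 : y - (q:ℝ) ≤ ε/(2*(s+1)) := by linarith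
  have h2 : s * (y - (q:ℝ)) ≤ s * (ε/(2*(s+1))) := mul_le_mul_of_nonneg_left h1 hs
  have h3 : s * (ε/(2*(s+1))) ≤ ε/2 := by
    rw [mul_div_assoc', div_le_div_iff₀ (by positivity) (by norm_num : (0:ℝ) < 2)]
    nlinarith
  nlinarith
end R


theorem stmt12 (d : ℕ)
    (γ : Measure (EuclideanSpace ℝ (Fin d))) [IsFiniteMeasure γ]
    (φ : ℝ → ℝ) (hφnn : ∀ s ∈ Ici (0:ℝ), 0 ≤ φ s)
    (hφconv : ConvexOn ℝ (Ici 0) φ) (hφlsc : LowerSemicontinuousOn φ (Ici 0))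
    (hφ1 : φ 1 = 0)
    (hφsuper : Filter.Tendsto (fun s => φ s / s) Filter.atTop Filter.atTop)
    (φstar : ℝ → ℝ)
    (hφstar : ∀ y : ℝ, φstar y = ⨆ s : Ici (0:ℝ), ((s : ℝ) * y - φ (s : ℝ)))
    (u : EuclideanSpace ℝ (Fin d) → ℝ) (hu : Measurable u) (hunn : ∀ x, 0 ≤ u x)
    (μ : Measure (EuclideanSpace ℝ (Fin d)))
    (hμ : μ = γ.withDensity (fun x => ENNReal.ofReal (u x)))
    (hprob : IsProbabilityMeasure μ)
    (hEfin : Integrable (fun x => φ (u x)) γ) :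
    ∫ x, φ (u x) ∂γ =
      ⨆ S : EuclideanSpace ℝ (Fin d) →ᵇ ℝ,
        (∫ x, S x ∂μ - ∫ x, φstar (S x) ∂γ) := by
  classical
  have hsm : Monotone φstar := phistar_mono hφnn hφsuper hφstar
  have hyoung : ∀ s : ℝ, 0 ≤ s → ∀ y : ℝ, s * y - φ s ≤ φstar y :=
    fun s hs y => young_ineq hφnn hφsuper hφstar hs y
  have hbic : ∀ s : ℝ, 0 ≤ s → ∀ ε : ℝ, 0 < ε → ∃ q : ℚ, φ s - ε ≤ s * (q:ℝ) - φstar (q:ℝ) :=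
    fun s hs ε hε => phistar_mono' hφnn hφstar hsm
      (fun s hs ε hε => biconj_real hφnn hφconv hφlsc hφstar hs hε) hs hε
  -- u is integrable
  have hμuniv : ∫⁻ x, ENNReal.ofReal (u x) ∂γ = 1 := by
    have h := hprob.measure_univ
    rw [hμ, withDensity_apply _ MeasurableSet.univ, setLIntegral_univ] at h
    exact h
  have hu_int : Integrable u γ := by
    refine ⟨hu.aestronglyMeasurable, ?_⟩
    rw [hasFiniteIntegral_iff_ofReal (ae_of_all _ hunn), hμuniv]
    exact ENNReal.one_lt_top
  -- integral identity
  have hμint : ∀ f : EuclideanSpace ℝ (Fin d) → ℝ, ∫ x, f x ∂μ = ∫ x, u x * f x ∂γ := by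
    intro f
    rw [hμ]
    have he : (fun x => ENNReal.ofReal (u x))
        = fun x => ((Real.toNNReal (u x) : NNReal) : ENNReal) := rfl
    rw [he, integral_withDensity_eq_integral_smul hu.real_toNNReal f]
    congr 1
    ext x
    rw [NNReal.smul_def, Real.coe_toNNReal _ (hunn x), smul_eq_mul]
  -- integrability of φstar ∘ f for bounded measurable f
  have hφstar_int : ∀ (f : EuclideanSpace ℝ (Fin d) → ℝ) (M : ℝ), Measurable f →
      (∀ x, |f x| ≤ M) → Integrable (fun x => φstar (f x)) γ := by
    intro f M hf hbd
    refine ⟨(hsm.measurable.comp hf).aestronglyMeasurable, ?_⟩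
    refine HasFiniteIntegral.of_bounded (C := max |φstar M| |φstar (-M)|) (ae_of_all _ fun x => ?_)
    have h1 := hsm (abs_le.1 (hbd x)).2
    have h2 := hsm (abs_le.1 (hbd x)).1
    rw [Real.norm_eq_abs, abs_le]
    constructor
    · calc -(max |φstar M| |φstar (-M)|) ≤ -|φstar (-M)| := neg_le_neg (le_max_right _ _)
        _ ≤ φstar (-M) := neg_abs_le _
        _ ≤ φstar (f x) := h2
    · exact h1.trans ((le_abs_self _).trans (le_max_left _ _))
  -- integrability of u * f for bounded measurable f
  have hmul_int : ∀ (f : EuclideanSpace ℝ (Fin d) → ℝ) (M : ℝ), Measurable f →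
      (∀ x, |f x| ≤ M) → Integrable (fun x => u x * f x) γ := by
    intro f M hf hbd
    have h := hu_int.bdd_mul hf.aestronglyMeasurable
      (c := M) (ae_of_all _ fun x => (Real.norm_eq_abs (f x)).le.trans (hbd x))
    simpa [mul_comm] using h
  -- the easy (≥) direction: every candidate is dominated
  have hFle : ∀ S : EuclideanSpace ℝ (Fin d) →ᵇ ℝ,
      (∫ x, S x ∂μ - ∫ x, φstar (S x) ∂γ) ≤ ∫ x, φ (u x) ∂γ := by
    intro S
    have hSbd : ∀ x, |S x| ≤ ‖S‖ := fun x => by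
      rw [← Real.norm_eq_abs]; exact S.norm_coe_le_norm x
    have hSm : Measurable fun x => S x := S.continuous.measurable
    have h2 : Integrable (fun x => u x * S x) γ := hmul_int _ ‖S‖ hSm hSbd
    have h3 : Integrable (fun x => φstar (S x)) γ := hφstar_int _ ‖S‖ hSm hSbd
    rw [hμint (fun x => S x), ← integral_sub h2 h3]
    refine integral_mono (h2.sub h3) hEfin fun x => ?_
    have := hyoung (u x) (hunn x) (S x)
    simp only [Pi.sub_apply]
    linarith
  have hbddA : BddAbove (Set.range fun S : EuclideanSpace ℝ (Fin d) →ᵇ ℝ =>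
      (∫ x, S x ∂μ - ∫ x, φstar (S x) ∂γ)) := by
    refine ⟨∫ x, φ (u x) ∂γ, ?_⟩
    rintro z ⟨S, rfl⟩
    exact hFle S
  set A := ⨆ S : EuclideanSpace ℝ (Fin d) →ᵇ ℝ,
    (∫ x, S x ∂μ - ∫ x, φstar (S x) ∂γ) with hA
  -- key approximation lemma
  have hkey : ∀ (Y : EuclideanSpace ℝ (Fin d) → ℝ) (M : ℝ), Measurable Y →
      (∀ x, |Y x| ≤ M) → (∫ x, (u x * Y x - φstar (Y x)) ∂γ) ≤ A := by
    intro Y M hYm hYbd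
    have hM0 : 0 ≤ M := le_trans (abs_nonneg _) (hYbd 0)
    set K := φstar (M+1) - φstar M with hK
    have hK0 : 0 ≤ K := sub_nonneg.2 (hsm (by linarith))
    have hφstarY_int : Integrable (fun x => φstar (Y x)) γ := hφstar_int Y M hYm hYbd
    have hLHS : ∫ x, (u x * Y x - φstar (Y x)) ∂γ
        = ∫ x, Y x ∂μ - ∫ x, φstar (Y x) ∂γ := by
      rw [hμint Y, ← integral_sub (hmul_int Y M hYm hYbd) hφstarY_int]
    rw [hLHS]
    refine le_of_forall_sub_le fun ε hε => ?_
    set ε' := ε / (1 + K) with hε'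
    have hε'0 : 0 < ε' := div_pos hε (by linarith)
    have hYnorm : ∀ x, ‖Y x‖ ≤ M := fun x => (Real.norm_eq_abs (Y x)).le.trans (hYbd x)
    have hνint : Integrable Y (μ + γ) :=
      ⟨hYm.aestronglyMeasurable, HasFiniteIntegral.of_bounded (ae_of_all _ hYnorm)⟩
    obtain ⟨g, hg, hgint⟩ := hνint.exists_boundedContinuous_integral_sub_le hε'0
    -- clamp
    set T : ℝ → ℝ := fun t => max (-M) (min M t) with hT
    have hTbd : ∀ t, |T t| ≤ M := fun t =>
      abs_le.2 ⟨le_max_left _ _, max_le (by linarith) (min_le_left _ _)⟩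
    have hTcont : Continuous T := continuous_const.max (continuous_const.min continuous_id)
    set S : EuclideanSpace ℝ (Fin d) →ᵇ ℝ :=
      BoundedContinuousFunction.ofNormedAddCommGroup (fun x => T (g x))
        (hTcont.comp g.continuous) M
        (fun x => (Real.norm_eq_abs _).le.trans (hTbd (g x))) with hS
    have hSx : ∀ x, S x = T (g x) := fun x => rfl
    have hTY : ∀ x, T (Y x) = Y x := by
      intro x
      obtain ⟨ha, hb⟩ := abs_le.1 (hYbd x)
      rw [hT]
      simp only
      rw [min_eq_right hb, max_eq_right ha]
    have hclose : ∀ x, |Y x - S x| ≤ |Y x - g x| := by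
      intro x
      have e : |Y x - S x| = |T (Y x) - T (g x)| := by rw [hTY x, hSx]
      rw [e]
      calc |T (Y x) - T (g x)| ≤ |min M (Y x) - min M (g x)| := by
            show |max (-M) (min M (Y x)) - max (-M) (min M (g x))| ≤ _
            rw [max_comm (-M) (min M (Y x)), max_comm (-M) (min M (g x))]
            exact abs_max_sub_max_le_abs (min M (Y x)) (min M (g x)) (-M)
        _ ≤ max |M - M| |Y x - g x| := abs_min_sub_min_le_max M (Y x) M (g x)
        _ = |Y x - g x| := by rw [sub_self, abs_zero, max_eq_right (abs_nonneg _)]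
    -- integral estimates
    have hYint_μ : Integrable Y μ :=
      ⟨hYm.aestronglyMeasurable, HasFiniteIntegral.of_bounded (ae_of_all _ hYnorm)⟩
    have hYint_γ : Integrable Y γ :=
      ⟨hYm.aestronglyMeasurable, HasFiniteIntegral.of_bounded (ae_of_all _ hYnorm)⟩
    have habs_int : Integrable (fun x => |Y x - g x|) (μ + γ) := (hνint.sub (g.integrable _)).abs
    have hdiff : ∫ x, |Y x - g x| ∂(μ + γ) ≤ ε' := by
      simpa [Real.norm_eq_abs] using hg
    have hμle : ∫ x, |Y x - g x| ∂μ ≤ ε' :=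
      le_trans (integral_mono_measure (Measure.le_add_right le_rfl)
        (ae_of_all _ fun x => abs_nonneg _) habs_int) hdiff
    have hγle : ∫ x, |Y x - g x| ∂γ ≤ ε' :=
      le_trans (integral_mono_measure (Measure.le_add_left le_rfl)
        (ae_of_all _ fun x => abs_nonneg _) habs_int) hdiff
    have hSint_μ : Integrable (fun x => S x) μ := S.integrable μ
    have hstep1 : ∫ x, Y x ∂μ ≤ ∫ x, S x ∂μ + ε' := by
      have h1 : ∫ x, Y x ∂μ - ∫ x, S x ∂μ = ∫ x, (Y x - S x) ∂μ :=
        (integral_sub hYint_μ hSint_μ).symm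
      have h2 : ∫ x, (Y x - S x) ∂μ ≤ ∫ x, |Y x - g x| ∂μ :=
        integral_mono (hYint_μ.sub hSint_μ) (hYint_μ.sub (g.integrable μ)).abs
          fun x => le_trans (le_abs_self _) (hclose x)
      linarith [hμle]
    have hφstarS_int : Integrable (fun x => φstar (S x)) γ :=
      hφstar_int _ M S.continuous.measurable (fun x => by rw [hSx]; exact hTbd (g x))
    have habs_γ : Integrable (fun x => |Y x - g x|) γ := (hYint_γ.sub (g.integrable γ)).abs
    have hstep2 : ∫ x, φstar (S x) ∂γ ≤ ∫ x, φstar (Y x) ∂γ + K * ε' := by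
      have hpt : ∀ x, φstar (S x) ≤ φstar (Y x) + K * |Y x - g x| := by
        intro x
        rcases le_total (S x) (Y x) with hc | hc
        · have := hsm hc
          have := mul_nonneg hK0 (abs_nonneg (Y x - g x))
          linarith
        · have hb : S x ≤ M := by
            rw [hSx]; exact (abs_le.1 (hTbd (g x))).2
          have h5 := phistar_lip hφnn hφsuper hφstar hc hb
          have h6 : S x - Y x ≤ |Y x - g x| := by
            calc S x - Y x ≤ |S x - Y x| := le_abs_self _
              _ = |Y x - S x| := abs_sub_comm _ _
              _ ≤ |Y x - g x| := hclose x
          have h7 : K * (S x - Y x) ≤ K * |Y x - g x| := mul_le_mul_of_nonneg_left h6 hK0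
          rw [← hK] at h5
          linarith
      have h8 : Integrable (fun x => φstar (Y x) + K * |Y x - g x|) γ :=
        hφstarY_int.add (habs_γ.const_mul K)
      have h9 := integral_mono hφstarS_int h8 hpt
      rw [integral_add hφstarY_int (habs_γ.const_mul K), integral_const_mul] at h9
      have h10 : K * ∫ x, |Y x - g x| ∂γ ≤ K * ε' := mul_le_mul_of_nonneg_left hγle hK0
      linarith
    have hFS : (∫ x, S x ∂μ - ∫ x, φstar (S x) ∂γ) ≤ A := le_ciSup hbddA S
    have heps : (1 + K) * ε' = ε := by
      rw [hε']
      field_simp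
    linarith [hstep1, hstep2, hFS]
  -- enumeration of the rationals
  set c : ℕ → ℝ := fun n => (((Denumerable.eqv ℚ).symm n : ℚ) : ℝ) with hc
  have hcq : ∀ q : ℚ, ∃ n, c n = (q:ℝ) := fun q =>
    ⟨Denumerable.eqv ℚ q, by
      show (((Denumerable.eqv ℚ).symm ((Denumerable.eqv ℚ) q) : ℚ) : ℝ) = (q:ℝ)
      rw [Equiv.symm_apply_apply]⟩
  -- recursive sequence of maximizers
  set Y : ℕ → EuclideanSpace ℝ (Fin d) → ℝ := fun n => Nat.rec (fun _ => c 0)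
    (fun n Yn x => if u x * c (n+1) - φstar (c (n+1)) ≤ u x * Yn x - φstar (Yn x)
      then Yn x else c (n+1)) n with hYdef
  have hYsucc : ∀ n x, Y (n+1) x = if u x * c (n+1) - φstar (c (n+1)) ≤ u x * Y n x - φstar (Y n x)
      then Y n x else c (n+1) := fun n x => rfl
  have hYmb : ∀ n, Measurable (Y n) ∧ ∃ M, ∀ x, |Y n x| ≤ M := by
    intro n
    induction n with
    | zero => exact ⟨measurable_const, ⟨|c 0|, fun x => le_refl _⟩⟩
    | succ n ih =>
      obtain ⟨hm, M, hM⟩ := ih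
      have hset : MeasurableSet {x | u x * c (n+1) - φstar (c (n+1))
          ≤ u x * Y n x - φstar (Y n x)} :=
        measurableSet_le ((hu.mul measurable_const).sub measurable_const)
          ((hu.mul hm).sub (hsm.measurable.comp hm))
      constructor
      · exact Measurable.ite hset hm measurable_const
      · refine ⟨max M |c (n+1)|, fun x => ?_⟩
        rw [hYsucc]
        split_ifs
        · exact (hM x).trans (le_max_left _ _)
        · exact le_max_right _ _
  have hgmono : ∀ x, Monotone fun n => u x * Y n x - φstar (Y n x) := by
    intro x
    apply monotone_nat_of_le_succ
    intro n
    rw [hYsucc]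
    split_ifs with h
    · exact le_refl _
    · exact (not_le.1 h).le
  have hglt : ∀ n x, u x * c n - φstar (c n) ≤ u x * Y n x - φstar (Y n x) := by
    intro n x
    cases n with
    | zero => exact le_refl _
    | succ n =>
      rw [hYsucc]
      split_ifs with h
      · exact h
      · exact le_refl _
  have hgle : ∀ n x, u x * Y n x - φstar (Y n x) ≤ φ (u x) := fun n x => by
    have := hyoung (u x) (hunn x) (Y n x)
    linarith
  have htend : ∀ x, Filter.Tendsto (fun n => u x * Y n x - φstar (Y n x))
      Filter.atTop (nhds (φ (u x))) := by
    intro x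
    have hbdd : BddAbove (Set.range fun n => u x * Y n x - φstar (Y n x)) := by
      refine ⟨φ (u x), ?_⟩
      rintro z ⟨n, rfl⟩
      exact hgle n x
    have h1 := tendsto_atTop_ciSup (hgmono x) hbdd
    have h2 : (⨆ n, (u x * Y n x - φstar (Y n x))) = φ (u x) := by
      refine le_antisymm (ciSup_le fun n => hgle n x) ?_
      refine le_of_forall_sub_le fun ε hε => ?_
      obtain ⟨q, hq⟩ := hbic (u x) (hunn x) ε hε
      obtain ⟨n, hn⟩ := hcq q
      have h3 : u x * c n - φstar (c n) ≤ ⨆ n, (u x * Y n x - φstar (Y n x)) :=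
        le_trans (hglt n x) (le_ciSup hbdd n)
      rw [hn] at h3
      linarith
    rwa [h2] at h1
  have hgint : ∀ n, Integrable (fun x => u x * Y n x - φstar (Y n x)) γ := fun n => by
    obtain ⟨hm, M, hM⟩ := hYmb n
    exact (hmul_int (Y n) M hm hM).sub (hφstar_int (Y n) M hm hM)
  have hlim : Filter.Tendsto (fun n => ∫ x, (u x * Y n x - φstar (Y n x)) ∂γ)
      Filter.atTop (nhds (∫ x, φ (u x) ∂γ)) :=
    integral_tendsto_of_tendsto_of_monotone hgint hEfin (ae_of_all _ hgmono) (ae_of_all _ htend)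
  refine le_antisymm ?_ (ciSup_le hFle)
  refine le_of_tendsto hlim (Filter.Eventually.of_forall fun n => ?_)
  obtain ⟨hm, M, hM⟩ := hYmb n
  exact hkey (Y n) M hm hM
end

section
/- The functional μ ↦ ∫ φ(dμ/dγ) dγ (with value +∞ if μ is not absolutely continuous w.r.t. γ) is lower semicontinuous with respect to narrow (weak) convergence of probability measures. -/
open Set MeasureTheory Filter ENNReal Classical Topology BoundedContinuousFunction

abbrev Espc (d : ℕ) : Type := EuclideanSpace ℝ (Fin d)

/-- The (restricted) Legendre transform of `φ`. -/
noncomputable def phiStar (φ : ℝ → ℝ) (s : ℝ) : ℝ :=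
  sSup ((fun t => s * t - φ t) '' Ici 0)

lemma phiStar_bddAbove {φ : ℝ → ℝ} (hφnn : ∀ s ∈ Ici (0:ℝ), 0 ≤ φ s)
    (hφsuper : Tendsto (fun s => φ s / s) atTop atTop) (s : ℝ) :
    BddAbove ((fun t => s * t - φ t) '' Ici 0) := by
  obtain ⟨T, hT⟩ := (hφsuper.eventually_ge_atTop |s|).exists_forall_of_atTop
  refine ⟨max (|s| * max T 1) 0, ?_⟩
  rintro z ⟨t, ht, rfl⟩
  simp only [mem_Ici] at ht
  rcases le_total t (max T 1) with h | h
  · have h1 : s * t ≤ |s| * t := mul_le_mul_of_nonneg_right (le_abs_self s) ht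
    have h2 : |s| * t ≤ |s| * max T 1 := mul_le_mul_of_nonneg_left h (abs_nonneg s)
    have h3 : 0 ≤ φ t := hφnn t ht
    calc s * t - φ t ≤ |s| * max T 1 - 0 := by linarith
    _ ≤ max (|s| * max T 1) 0 := by simp
  · have htpos : (0:ℝ) < t := lt_of_lt_of_le (by norm_num : (0:ℝ) < 1) (le_trans (le_max_right T 1) h)
    have h1 : |s| ≤ φ t / t := hT t (le_trans (le_max_left T 1) h)
    have h2 : |s| * t ≤ φ t := by
      rw [div_eq_mul_inv] at h1
      calc |s| * t ≤ (φ t * t⁻¹) * t := mul_le_mul_of_nonneg_right h1 htpos.le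
      _ = φ t := by field_simp
    have h3 : s * t ≤ |s| * t := mul_le_mul_of_nonneg_right (le_abs_self s) htpos.le
    calc s * t - φ t ≤ 0 := by linarith
    _ ≤ max (|s| * max T 1) 0 := le_max_right _ _

lemma phiStar_ge {φ : ℝ → ℝ} (hφnn : ∀ s ∈ Ici (0:ℝ), 0 ≤ φ s)
    (hφsuper : Tendsto (fun s => φ s / s) atTop atTop) (s : ℝ) {t : ℝ} (ht : 0 ≤ t) :
    s * t - φ t ≤ phiStar φ s :=
  le_csSup (phiStar_bddAbove hφnn hφsuper s) ⟨t, ht, rfl⟩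

lemma phiStar_le {φ : ℝ → ℝ} {s C : ℝ} (h : ∀ t ∈ Ici (0:ℝ), s * t - φ t ≤ C) :
    phiStar φ s ≤ C :=
  csSup_le ⟨_, ⟨0, mem_Ici.2 le_rfl, rfl⟩⟩ (by rintro z ⟨t, ht, rfl⟩; exact h t ht)

lemma phiStar_mono {φ : ℝ → ℝ} (hφnn : ∀ s ∈ Ici (0:ℝ), 0 ≤ φ s)
    (hφsuper : Tendsto (fun s => φ s / s) atTop atTop) :
    Monotone (phiStar φ) := by
  intro a b hab
  refine phiStar_le fun t ht => ?_
  have : a * t ≤ b * t := mul_le_mul_of_nonneg_right hab ht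
  have := phiStar_ge hφnn hφsuper b ht
  linarith

lemma phiStar_zero_nonpos {φ : ℝ → ℝ} (hφnn : ∀ s ∈ Ici (0:ℝ), 0 ≤ φ s) :
    phiStar φ 0 ≤ 0 :=
  phiStar_le fun t ht => by have := hφnn t ht; linarith

lemma phiStar_convexOn {φ : ℝ → ℝ} (hφnn : ∀ s ∈ Ici (0:ℝ), 0 ≤ φ s)
    (hφsuper : Tendsto (fun s => φ s / s) atTop atTop) :
    ConvexOn ℝ (univ : Set ℝ) (phiStar φ) := by
  refine ⟨convex_univ, fun x _ y _ a b ha hb hab => ?_⟩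
  refine phiStar_le fun t ht => ?_
  have hx := phiStar_ge hφnn hφsuper x ht
  have hy := phiStar_ge hφnn hφsuper y ht
  have h1 : a * (x * t - φ t) ≤ a * phiStar φ x := mul_le_mul_of_nonneg_left hx ha
  have h2 : b * (y * t - φ t) ≤ b * phiStar φ y := mul_le_mul_of_nonneg_left hy hb
  have key : (a * x + b * y) * t - φ t = a * (x * t - φ t) + b * (y * t - φ t) := by
    linear_combination (φ t) * hab
  simp only [smul_eq_mul]
  linarith

/-- Lipschitz-type estimate for convex functions on `univ`, on an interval `[-K, K]`. -/
lemma convexOn_abs_sub_le {f : ℝ → ℝ} (hf : ConvexOn ℝ (univ : Set ℝ) f) {K a b : ℝ}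
    (ha : a ∈ Icc (-K) K) (hb : b ∈ Icc (-K) K) :
    |f b - f a| ≤ (max |f (K+2) - f (K+1)| |f (-K-1) - f (-K-2)|) * |b - a| := by
  have hK : (0:ℝ) ≤ K := by
    rcases ha with ⟨h1, h2⟩; linarith
  -- main estimate for a ≤ b
  have main : ∀ u v : ℝ, u ∈ Icc (-K) K → v ∈ Icc (-K) K → u < v →
      (f (-K-1) - f (-K-2)) * (v - u) ≤ f v - f u ∧
      f v - f u ≤ (f (K+2) - f (K+1)) * (v - u) := by
    intro u v hu hv huv
    have hvu : (0:ℝ) < v - u := by linarith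
    constructor
    · -- lower bound: slope(-K-2, -K-1) ≤ slope(-K-1, u) ≤ slope(u, v)
      have s1 : (f (-K-1) - f (-K-2)) / ((-K-1) - (-K-2)) ≤ (f u - f (-K-1)) / (u - (-K-1)) :=
        hf.slope_mono_adjacent (mem_univ _) (mem_univ _) (by linarith) (by linarith [hu.1])
      have s2 : (f u - f (-K-1)) / (u - (-K-1)) ≤ (f v - f u) / (v - u) :=
        hf.slope_mono_adjacent (mem_univ _) (mem_univ _) (by linarith [hu.1]) huv
      have s3 : (f (-K-1) - f (-K-2)) / ((-K-1) - (-K-2)) ≤ (f v - f u) / (v - u) := s1.trans s2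
      have hden : ((-K-1:ℝ) - (-K-2)) = 1 := by ring
      rw [hden, div_one] at s3
      calc (f (-K-1) - f (-K-2)) * (v - u) ≤ ((f v - f u) / (v - u)) * (v - u) :=
            mul_le_mul_of_nonneg_right s3 hvu.le
        _ = f v - f u := by field_simp
    · -- upper bound: slope(u,v) ≤ slope(v, K+1) ≤ slope(K+1, K+2)
      have s1 : (f v - f u) / (v - u) ≤ (f (K+1) - f v) / ((K+1) - v) :=
        hf.slope_mono_adjacent (mem_univ _) (mem_univ _) huv (by linarith [hv.2])
      have s2 : (f (K+1) - f v) / ((K+1) - v) ≤ (f (K+2) - f (K+1)) / ((K+2) - (K+1)) :=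
        hf.slope_mono_adjacent (mem_univ _) (mem_univ _) (by linarith [hv.2]) (by linarith)
      have s3 : (f v - f u) / (v - u) ≤ (f (K+2) - f (K+1)) / ((K+2) - (K+1)) := s1.trans s2
      have hden : ((K+2:ℝ) - (K+1)) = 1 := by ring
      rw [hden, div_one] at s3
      calc f v - f u = ((f v - f u) / (v - u)) * (v - u) := by field_simp
        _ ≤ (f (K+2) - f (K+1)) * (v - u) := mul_le_mul_of_nonneg_right s3 hvu.le
  rcases lt_trichotomy a b with h | h | h
  · obtain ⟨l, r⟩ := main a b ha hb h
    rw [abs_of_pos (by linarith : (0:ℝ) < b - a)]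
    rw [abs_le]
    constructor
    · have : -(max |f (K+2) - f (K+1)| |f (-K-1) - f (-K-2)|) * (b - a)
          ≤ (f (-K-1) - f (-K-2)) * (b - a) := by
        apply mul_le_mul_of_nonneg_right _ (by linarith)
        have : |f (-K-1) - f (-K-2)| ≤ max |f (K+2) - f (K+1)| |f (-K-1) - f (-K-2)| :=
          le_max_right _ _
        have := neg_abs_le (f (-K-1) - f (-K-2))
        linarith
      linarith
    · have : (f (K+2) - f (K+1)) * (b - a)
          ≤ (max |f (K+2) - f (K+1)| |f (-K-1) - f (-K-2)|) * (b - a) := by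
        apply mul_le_mul_of_nonneg_right _ (by linarith)
        have := le_abs_self (f (K+2) - f (K+1))
        have : |f (K+2) - f (K+1)| ≤ max |f (K+2) - f (K+1)| |f (-K-1) - f (-K-2)| :=
          le_max_left _ _
        linarith [le_abs_self (f (K+2) - f (K+1))]
      linarith
  · simp [h]
  · obtain ⟨l, r⟩ := main b a hb ha h
    rw [show f b - f a = -(f a - f b) by ring, abs_neg]
    rw [show |b - a| = a - b by rw [abs_sub_comm]; exact abs_of_pos (by linarith)]
    rw [abs_le]
    constructor
    · have : -(max |f (K+2) - f (K+1)| |f (-K-1) - f (-K-2)|) * (a - b)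
          ≤ (f (-K-1) - f (-K-2)) * (a - b) := by
        apply mul_le_mul_of_nonneg_right _ (by linarith)
        have h1 : |f (-K-1) - f (-K-2)| ≤ max |f (K+2) - f (K+1)| |f (-K-1) - f (-K-2)| :=
          le_max_right _ _
        have := neg_abs_le (f (-K-1) - f (-K-2))
        linarith
      linarith
    · have : (f (K+2) - f (K+1)) * (a - b)
          ≤ (max |f (K+2) - f (K+1)| |f (-K-1) - f (-K-2)|) * (a - b) := by
        apply mul_le_mul_of_nonneg_right _ (by linarith)
        have h1 : |f (K+2) - f (K+1)| ≤ max |f (K+2) - f (K+1)| |f (-K-1) - f (-K-2)| :=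
          le_max_left _ _
        linarith [le_abs_self (f (K+2) - f (K+1))]
      linarith

lemma convexOn_continuous {f : ℝ → ℝ} (hf : ConvexOn ℝ (univ : Set ℝ) f) :
    Continuous f := by
  rw [continuous_iff_continuousAt]
  intro x
  set K := |x| + 1 with hK
  apply continuousAt_of_locally_lipschitz (show (0:ℝ) < 1 by norm_num)
    (max |f (K+2) - f (K+1)| |f (-K-1) - f (-K-2)|)
  intro y hy
  have hx : x ∈ Icc (-K) K := by
    constructor <;> [linarith [neg_abs_le x]; linarith [le_abs_self x]]
  have hy' : y ∈ Icc (-K) K := by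
    rw [Real.dist_eq] at hy
    constructor <;> [linarith [neg_abs_le x, abs_le.1 hy.le]; linarith [le_abs_self x, (abs_le.1 hy.le).2, (abs_le.1 hy.le).1]]
  have := convexOn_abs_sub_le hf hx hy'
  rw [Real.dist_eq, Real.dist_eq]
  calc |f y - f x| ≤ _ * |y - x| := this
  _ = _ := rfl

/-- A convex, lsc, nonnegative function on `[0, ∞)` admits at every point a line below it
with value close to the function value. -/
lemma exists_supporting_line {φ : ℝ → ℝ} (hφnn : ∀ s ∈ Ici (0:ℝ), 0 ≤ φ s)
    (hφconv : ConvexOn ℝ (Ici 0) φ) (hφlsc : LowerSemicontinuousOn φ (Ici 0))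
    {t₀ c : ℝ} (ht₀ : 0 ≤ t₀) (hc : c < φ t₀) :
    ∃ p : ℝ × ℝ, (∀ t ∈ Ici (0:ℝ), p.1 * t + p.2 ≤ φ t) ∧ c < p.1 * t₀ + p.2 := by
  rcases lt_or_ge c 0 with hc0 | hc0
  · exact ⟨(0, 0), fun t ht => by simpa using hφnn t ht, by simpa using hc0⟩
  rcases eq_or_lt_of_le ht₀ with h0 | h0
  · -- t₀ = 0 : use lower semicontinuity at 0
    subst h0
    set c' := (c + φ 0) / 2 with hc'
    have hcc' : c < c' := by simp only [hc']; linarith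
    have hc'φ : c' < φ 0 := by simp only [hc']; linarith
    have h := hφlsc 0 (mem_Ici.2 le_rfl) c' hc'φ
    rw [eventually_nhdsWithin_iff] at h
    obtain ⟨δ, hδpos, hδ⟩ := Metric.eventually_nhds_iff.1 h
    have hc'pos : 0 < c' := lt_of_le_of_lt hc0 hcc'
    set δ' := δ / 2 with hδ'
    have hδ'pos : 0 < δ' := by positivity
    refine ⟨(-c' / δ', c'), ?_, by simpa using hcc'⟩
    intro t ht
    simp only [mem_Ici] at ht
    rcases le_or_gt t δ' with h1 | h1
    · have htb : dist t 0 < δ := by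
        rw [Real.dist_eq, sub_zero, abs_of_nonneg ht]; simp only [hδ'] at h1; linarith
      have := hδ htb (mem_Ici.2 ht)
      have hterm : -c' / δ' * t ≤ 0 := by
        apply mul_nonpos_of_nonpos_of_nonneg _ ht
        apply div_nonpos_of_nonpos_of_nonneg (by linarith) hδ'pos.le
      linarith
    · have : -c' / δ' * t + c' ≤ 0 := by
        have h2 : -c' / δ' * t ≤ -c' / δ' * δ' := by
          apply mul_le_mul_of_nonpos_left h1.le
          apply div_nonpos_of_nonpos_of_nonneg (by linarith) hδ'pos.le
        have h3 : -c' / δ' * δ' = -c' := by field_simp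
        linarith
      have := hφnn t ht
      linarith
  · -- t₀ > 0 : supporting line via left slopes
    set S := (fun t => (φ t₀ - φ t) / (t₀ - t)) '' Ico 0 t₀ with hS
    have hSne : S.Nonempty := ⟨_, ⟨0, ⟨le_rfl, h0⟩, rfl⟩⟩
    have hSbdd : BddAbove S := by
      refine ⟨(φ (t₀ + 1) - φ t₀) / 1, ?_⟩
      rintro z ⟨t, ⟨ht0, htt₀⟩, rfl⟩
      have := hφconv.slope_mono_adjacent (mem_Ici.2 ht0) (mem_Ici.2 (by linarith : (0:ℝ) ≤ t₀ + 1))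
        htt₀ (by linarith)
      convert this using 2 <;> first | rfl | ring
    set s := sSup S with hs
    refine ⟨(s, φ t₀ - s * t₀), ?_, by simp; linarith⟩
    intro t ht
    simp only [mem_Ici] at ht
    show s * t + (φ t₀ - s * t₀) ≤ φ t
    rcases lt_trichotomy t t₀ with h1 | h1 | h1
    · -- t < t₀ : slope(t, t₀) ≤ s
      have hmem : (φ t₀ - φ t) / (t₀ - t) ∈ S := ⟨t, ⟨ht, h1⟩, rfl⟩
      have hle : (φ t₀ - φ t) / (t₀ - t) ≤ s := le_csSup hSbdd hmem
      have hpos : (0:ℝ) < t₀ - t := by linarith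
      have : φ t₀ - φ t ≤ s * (t₀ - t) := by
        have := mul_le_mul_of_nonneg_right hle hpos.le
        rwa [div_mul_cancel₀] at this
        exact ne_of_gt hpos
      linarith [this]
    · subst h1; linarith
    · -- t > t₀ : s ≤ slope(t₀, t)
      have hle : s ≤ (φ t - φ t₀) / (t - t₀) := by
        apply csSup_le hSne
        rintro z ⟨u, ⟨hu0, hut₀⟩, rfl⟩
        exact hφconv.slope_mono_adjacent (mem_Ici.2 hu0) (mem_Ici.2 ht) hut₀ h1
      have hpos : (0:ℝ) < t - t₀ := by linarith
      have : s * (t - t₀) ≤ φ t - φ t₀ := by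
        have := mul_le_mul_of_nonneg_right hle hpos.le
        rwa [div_mul_cancel₀] at this
        exact ne_of_gt hpos
      linarith [this]

lemma phiStar_continuous {φ : ℝ → ℝ} (hφnn : ∀ s ∈ Ici (0:ℝ), 0 ≤ φ s)
    (hφsuper : Tendsto (fun s => φ s / s) atTop atTop) : Continuous (phiStar φ) :=
  convexOn_continuous (phiStar_convexOn hφnn hφsuper)

set_option maxHeartbeats 2000000 in
theorem stmt13 (d : ℕ)
    (γ : Measure (EuclideanSpace ℝ (Fin d))) [IsFiniteMeasure γ]
    (φ : ℝ → ℝ) (hφnn : ∀ s ∈ Ici (0:ℝ), 0 ≤ φ s)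
    (hφconv : ConvexOn ℝ (Ici 0) φ) (hφlsc : LowerSemicontinuousOn φ (Ici 0))
    (hφsuper : Tendsto (fun s => φ s / s) atTop atTop)
    (F : ProbabilityMeasure (EuclideanSpace ℝ (Fin d)) → ℝ≥0∞)
    (hF : ∀ μ : ProbabilityMeasure (EuclideanSpace ℝ (Fin d)),
      F μ = if (μ : Measure (EuclideanSpace ℝ (Fin d))) ≪ γ then
        ∫⁻ x, ENNReal.ofReal (φ (((μ : Measure (EuclideanSpace ℝ (Fin d))).rnDeriv γ x).toReal)) ∂γ
      else ⊤) :
    LowerSemicontinuous F := by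
  classical
  have φs_cont : Continuous (phiStar φ) := phiStar_continuous hφnn hφsuper
  set G : (Espc d →ᵇ ℝ) → ProbabilityMeasure (Espc d) → ℝ≥0∞ :=
    fun f ν => ENNReal.ofReal ((∫ x, f x ∂(ν : Measure (Espc d))) - ∫ x, phiStar φ (f x) ∂γ) with hGdef
  have hGcont : ∀ f, Continuous (G f) := by
    intro f
    apply ENNReal.continuous_ofReal.comp
    exact (ProbabilityMeasure.continuous_integral_boundedContinuousFunction f).sub continuous_const
  suffices key : ∀ ν, F ν = ⨆ f, G f ν by
    have : F = fun ν => ⨆ f, G f ν := funext key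
    rw [this]
    exact lowerSemicontinuous_iSup fun f => (hGcont f).lowerSemicontinuous
  intro ν
  rw [hF ν]
  -- the density of ν w.r.t. γ
  set ρ : Espc d → ℝ := fun x => ((ν : Measure (Espc d)).rnDeriv γ x).toReal with hρdef
  have hρmeas : Measurable ρ := (Measure.measurable_rnDeriv _ _).ennreal_toReal
  have hρnn : ∀ x, 0 ≤ ρ x := fun x => ENNReal.toReal_nonneg
  have hρint : Integrable ρ γ := Measure.integrable_toReal_rnDeriv
  -- integrability of phiStar ∘ h for bounded measurable h
  have hφsint : ∀ (m : Measure (Espc d)) [IsFiniteMeasure m] (h : Espc d → ℝ) (hm : AEStronglyMeasurable h m)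
      (K : ℝ) (hK : 0 ≤ K) (hb : ∀ x, |h x| ≤ K), Integrable (fun x => phiStar φ (h x)) m := by
    intro m _ h hm K hK hb
    have hmeas : AEStronglyMeasurable (fun x => phiStar φ (h x)) m :=
      φs_cont.comp_aestronglyMeasurable hm
    set M := max |phiStar φ (K+2) - phiStar φ (K+1)| |phiStar φ (-K-1) - phiStar φ (-K-2)| with hM
    refine (integrable_const (|phiStar φ 0| + M * K)).mono' hmeas (ae_of_all _ fun x => ?_)
    have h0 : (0:ℝ) ∈ Icc (-K) K := by constructor <;> linarith
    have hx : h x ∈ Icc (-K) K := abs_le.1 (hb x)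
    have := convexOn_abs_sub_le (phiStar_convexOn hφnn hφsuper) h0 hx
    rw [Real.norm_eq_abs]
    have habs : |h x - 0| ≤ K := by simpa using hb x
    have hMnn : 0 ≤ M := le_trans (abs_nonneg _) (le_max_left _ _)
    calc |phiStar φ (h x)| ≤ |phiStar φ (h x) - phiStar φ 0| + |phiStar φ 0| := by
          have := abs_sub_abs_le_abs_sub (phiStar φ (h x)) (phiStar φ 0)
          have := abs_add_le (phiStar φ (h x) - phiStar φ 0) (phiStar φ 0)
          calc |phiStar φ (h x)| = |(phiStar φ (h x) - phiStar φ 0) + phiStar φ 0| := by ring_nf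
          _ ≤ _ := abs_add_le _ _
    _ ≤ M * |h x - 0| + |phiStar φ 0| := by linarith [this]
    _ ≤ M * K + |phiStar φ 0| := by nlinarith [abs_nonneg (h x - 0)]
    _ = |phiStar φ 0| + M * K := by ring
  apply le_antisymm
  · -- hard direction : F ν ≤ ⨆ f, G f ν
    split_ifs with hac
    · -- absolutely continuous case : duality lower bound
      -- countable family of affine functions below φ
      set L : Set (ℝ × ℝ) := {p | ∀ t ∈ Ici (0:ℝ), p.1 * t + p.2 ≤ φ t} with hLdef
      have hL0 : ((0:ℝ), (0:ℝ)) ∈ L := fun t ht => by simpa using hφnn t ht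
      obtain ⟨D₀, hD₀count, hD₀dense⟩ := TopologicalSpace.exists_countable_dense ↥L
      obtain ⟨e₀, he₀⟩ := ((hD₀count.image (fun (q : ↥L) => (q : ℝ × ℝ))).insert
        ((0:ℝ), (0:ℝ))).exists_eq_range (insert_nonempty _ _)
      set e : ℕ → ℝ × ℝ := fun n => Nat.casesOn n ((0:ℝ), (0:ℝ)) e₀ with hedef
      have he0 : e 0 = ((0:ℝ), (0:ℝ)) := rfl
      have heL : ∀ n, e n ∈ L := by
        intro n
        cases n with
        | zero => exact hL0
        | succ k =>
          have hk : e₀ k ∈ insert ((0:ℝ), (0:ℝ))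
              ((fun (q : ↥L) => (q : ℝ × ℝ)) '' D₀) := by
            rw [he₀]; exact mem_range_self k
          rcases hk with hk | hk
          · show e₀ k ∈ L; rw [hk]; exact hL0
          · obtain ⟨q, _, hq⟩ := hk
            show e₀ k ∈ L; rw [← hq]; exact q.2
      set ℓ : ℕ → ℝ → ℝ := fun n t => (e n).1 * t + (e n).2 with hℓdef
      have hℓcont : ∀ n, Continuous (ℓ n) := fun n =>
        (continuous_const.mul continuous_id).add continuous_const
      have hℓ0 : ∀ t, ℓ 0 t = 0 := fun t => by simp [hℓdef, he0]
      -- density approximation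
      have happrox : ∀ t ∈ Ici (0:ℝ), ∀ c, c < φ t → ∃ n, c < ℓ n t := by
        intro t ht c hc
        obtain ⟨p, hpL, hpval⟩ := exists_supporting_line hφnn hφconv hφlsc ht hc
        set ε := (p.1 * t + p.2 - c) / (2 * (t + 1)) with hεdef
        have htnn : (0:ℝ) ≤ t := ht
        have hεpos : 0 < ε := by
          apply div_pos (by linarith) (by linarith)
        have hmem := hD₀dense ⟨p, hpL⟩
        rw [Metric.mem_closure_iff] at hmem
        obtain ⟨q₀, hq₀D, hq₀dist⟩ := hmem ε hεpos
        rw [Subtype.dist_eq] at hq₀dist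
        have hq₀mem : (q₀ : ℝ × ℝ) ∈ insert ((0:ℝ), (0:ℝ))
            ((fun (q : ↥L) => (q : ℝ × ℝ)) '' D₀) :=
          mem_insert_of_mem _ ⟨q₀, hq₀D, rfl⟩
        rw [he₀] at hq₀mem
        obtain ⟨k, hk⟩ := hq₀mem
        refine ⟨k + 1, ?_⟩
        have hek : e (k + 1) = (q₀ : ℝ × ℝ) := by rw [hedef]; exact hk
        have h1 : dist (p.1) ((q₀ : ℝ × ℝ).1) ≤ dist p (q₀ : ℝ × ℝ) := by
          rw [Prod.dist_eq]; exact le_max_left _ _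
        have h2 : dist (p.2) ((q₀ : ℝ × ℝ).2) ≤ dist p (q₀ : ℝ × ℝ) := by
          rw [Prod.dist_eq]; exact le_max_right _ _
        rw [Real.dist_eq] at h1 h2
        have hd1 : |p.1 - (q₀ : ℝ × ℝ).1| < ε := lt_of_le_of_lt h1 hq₀dist
        have hd2 : |p.2 - (q₀ : ℝ × ℝ).2| < ε := lt_of_le_of_lt h2 hq₀dist
        have hest : |p.1 * t + p.2 - ((q₀ : ℝ × ℝ).1 * t + (q₀ : ℝ × ℝ).2)| ≤
            |p.1 - (q₀ : ℝ × ℝ).1| * t + |p.2 - (q₀ : ℝ × ℝ).2| := by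
          have : p.1 * t + p.2 - ((q₀ : ℝ × ℝ).1 * t + (q₀ : ℝ × ℝ).2)
              = (p.1 - (q₀ : ℝ × ℝ).1) * t + (p.2 - (q₀ : ℝ × ℝ).2) := by ring
          rw [this]
          calc |(p.1 - (q₀ : ℝ × ℝ).1) * t + (p.2 - (q₀ : ℝ × ℝ).2)|
              ≤ |(p.1 - (q₀ : ℝ × ℝ).1) * t| + |(p.2 - (q₀ : ℝ × ℝ).2)| := abs_add_le _ _
          _ = |p.1 - (q₀ : ℝ × ℝ).1| * t + |p.2 - (q₀ : ℝ × ℝ).2| := by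
              rw [abs_mul, abs_of_nonneg htnn]
        have ht1 : (t + 1) ≠ 0 := by linarith
        have hεt : ε * (t + 1) = (p.1 * t + p.2 - c) / 2 := by
          rw [hεdef]
          field_simp
        have : |p.1 - (q₀ : ℝ × ℝ).1| * t + |p.2 - (q₀ : ℝ × ℝ).2| < ε * (t + 1) := by
          have hh : |p.1 - (q₀ : ℝ × ℝ).1| * t ≤ ε * t :=
            mul_le_mul_of_nonneg_right hd1.le htnn
          nlinarith
        show c < ℓ (k+1) t
        rw [hℓdef]
        simp only [hek]
        have := abs_le.1 (le_of_lt (lt_of_le_of_lt hest this))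
        nlinarith [this.1, this.2]
      -- partial maxima
      set g : ℕ → ℝ → ℝ := fun N => Nat.rec (ℓ 0)
        (fun k gk t => max (gk t) (ℓ (k+1) t)) N with hgdef
      have hg0 : ∀ t, g 0 t = ℓ 0 t := fun t => rfl
      have hgsucc : ∀ N t, g (N+1) t = max (g N t) (ℓ (N+1) t) := fun N t => rfl
      have hgcont : ∀ N, Continuous (g N) := by
        intro N
        induction N with
        | zero => exact hℓcont 0
        | succ k ih => exact ih.max (hℓcont (k+1))
      have hℓg : ∀ N n, n ≤ N → ∀ t, ℓ n t ≤ g N t := by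
        intro N
        induction N with
        | zero => intro n hn t; interval_cases n; exact le_of_eq rfl
        | succ k ih =>
          intro n hn t
          rcases Nat.lt_succ_iff_lt_or_eq.1 (Nat.lt_succ_of_le hn) with h | h
          · exact le_trans (ih n (Nat.lt_succ_iff.1 h) t) (by rw [hgsucc]; exact le_max_left _ _)
          · rw [h, hgsucc]; exact le_max_right _ _
      have hgexists : ∀ N t, ∃ n, n ≤ N ∧ g N t = ℓ n t := by
        intro N
        induction N with
        | zero => intro t; exact ⟨0, le_rfl, rfl⟩
        | succ k ih =>
          intro t
          obtain ⟨n, hn, hgn⟩ := ih t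
          rcases le_total (ℓ (k+1) t) (g k t) with h | h
          · exact ⟨n, Nat.le_succ_of_le hn, by rw [hgsucc, max_eq_left h, hgn]⟩
          · exact ⟨k+1, le_rfl, by rw [hgsucc, max_eq_right h]⟩
      have hgle : ∀ N, ∀ t ∈ Ici (0:ℝ), g N t ≤ φ t := by
        intro N t ht
        obtain ⟨n, _, hgn⟩ := hgexists N t
        rw [hgn]
        exact heL n t ht
      have hgnn : ∀ N t, 0 ≤ g N t := by
        intro N t
        have := hℓg N 0 (Nat.zero_le N) t
        rwa [hℓ0] at this
      have hgmono : ∀ t, Monotone fun N => g N t := by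
        intro t
        apply monotone_nat_of_le_succ
        intro N
        rw [hgsucc]
        exact le_max_left _ _
      -- pointwise monotone convergence of g N t to φ t
      have hsup : ∀ t ∈ Ici (0:ℝ), Tendsto (fun N => g N t) atTop (𝓝 (φ t)) := by
        intro t ht
        have hbdd : BddAbove (range fun N => g N t) := by
          refine ⟨φ t, ?_⟩
          rintro z ⟨N, rfl⟩
          exact hgle N t ht
        have htend := tendsto_atTop_ciSup (hgmono t) hbdd
        have heq : ⨆ N, g N t = φ t := by
          apply le_antisymm (ciSup_le fun N => hgle N t ht)
          by_contra hlt
          push_neg at hlt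
          obtain ⟨n, hn⟩ := happrox t ht _ hlt
          exact absurd (lt_of_lt_of_le (lt_of_lt_of_le hn (hℓg n n le_rfl t))
            (le_ciSup hbdd n)) (lt_irrefl _)
        rwa [heq] at htend
      -- monotone convergence in the Lebesgue integral
      have hmeasN : ∀ N, Measurable fun x => ENNReal.ofReal (g N (ρ x)) := fun N =>
        ((hgcont N).measurable.comp hρmeas).ennreal_ofReal
      have hMCT : ∫⁻ x, ENNReal.ofReal (φ (ρ x)) ∂γ
          = ⨆ N, ∫⁻ x, ENNReal.ofReal (g N (ρ x)) ∂γ := by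
        rw [← lintegral_iSup hmeasN]
        · apply lintegral_congr
          intro x
          have htend := (ENNReal.continuous_ofReal.tendsto _).comp (hsup (ρ x) (hρnn x))
          exact (iSup_eq_of_tendsto
            (fun a b hab => ENNReal.ofReal_le_ofReal (hgmono (ρ x) hab)) htend).symm
        · intro a b hab x
          exact ENNReal.ofReal_le_ofReal (hgmono (ρ x) hab)
      have hgoal : (fun x => ENNReal.ofReal (φ (((ν : Measure (Espc d)).rnDeriv γ x).toReal)))
          = fun x => ENNReal.ofReal (φ (ρ x)) := rfl
      show ∫⁻ x, ENNReal.ofReal (φ (((ν : Measure (Espc d)).rnDeriv γ x).toReal)) ∂γ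
          ≤ ⨆ f, G f ν
      rw [hgoal, hMCT]
      apply iSup_le
      intro N
      -- slope and intercept bounds
      set K : ℝ := (Finset.range (N+1)).sup' Finset.nonempty_range_add_one
        (fun n => |(e n).1|) with hKdef
      set B : ℝ := (Finset.range (N+1)).sup' Finset.nonempty_range_add_one
        (fun n => |(e n).2|) with hBdef
      have hKb : ∀ n, n ≤ N → |(e n).1| ≤ K := by
        intro n hn
        rw [hKdef]
        exact Finset.le_sup' (fun n => |(e n).1|) (Finset.mem_range.2 (Nat.lt_succ_of_le hn))
      have hBb : ∀ n, n ≤ N → |(e n).2| ≤ B := by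
        intro n hn
        rw [hBdef]
        exact Finset.le_sup' (fun n => |(e n).2|) (Finset.mem_range.2 (Nat.lt_succ_of_le hn))
      have hKnn : 0 ≤ K := le_trans (abs_nonneg _) (hKb 0 (Nat.zero_le N))
      have hBnn : 0 ≤ B := le_trans (abs_nonneg _) (hBb 0 (Nat.zero_le N))
      have hglin : ∀ t, 0 ≤ t → g N t ≤ K * t + B := by
        intro t ht
        obtain ⟨n, hn, hgn⟩ := hgexists N t
        rw [hgn]
        have h1 : (e n).1 * t ≤ K * t :=
          mul_le_mul_of_nonneg_right (le_trans (le_abs_self _) (hKb n hn)) ht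
        have h2 : (e n).2 ≤ B := le_trans (le_abs_self _) (hBb n hn)
        simp only [hℓdef]
        linarith
      -- integrability of g N ∘ ρ
      have hgρmeas : AEStronglyMeasurable (fun x => g N (ρ x)) γ :=
        ((hgcont N).measurable.comp hρmeas).aestronglyMeasurable
      have hgρint : Integrable (fun x => g N (ρ x)) γ := by
        refine ((hρint.const_mul K).add (integrable_const B)).mono' hgρmeas
          (ae_of_all _ fun x => ?_)
        rw [Real.norm_eq_abs, abs_of_nonneg (hgnn N (ρ x))]
        exact hglin (ρ x) (hρnn x)
      set I : ℝ := ∫ x, g N (ρ x) ∂γ with hIdef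
      have hIrw : ∫⁻ x, ENNReal.ofReal (g N (ρ x)) ∂γ = ENNReal.ofReal I :=
        (ofReal_integral_eq_lintegral_ofReal hgρint
          (ae_of_all _ fun x => hgnn N (ρ x))).symm
      rw [hIrw]
      -- the subgradient step function
      have hPex : ∀ t : ℝ, ∃ n, n ≤ N ∧ g N t = ℓ n t := hgexists N
      set H : ℝ → ℝ := fun t => (e (Nat.find (hPex t))).1 with hHdef
      have hHmeas : Measurable H := by
        apply Measurable.find (f := fun n (_ : ℝ) => (e n).1)
          (fun n => measurable_const)
        intro n
        have : {t : ℝ | n ≤ N ∧ g N t = ℓ n t}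
            = if n ≤ N then {t : ℝ | g N t = ℓ n t} else ∅ := by
          split_ifs with h
          · ext t; simp [h]
          · ext t; simp [h]
        rw [this]
        split_ifs with h
        · exact measurableSet_eq_fun (hgcont N).measurable (hℓcont n).measurable
        · exact MeasurableSet.empty
      have hHabs : ∀ t, |H t| ≤ K := by
        intro t
        exact hKb _ (Nat.find_spec (hPex t)).1
      have hHkey : ∀ t, 0 ≤ t → g N t + phiStar φ (H t) ≤ H t * t := by
        intro t ht
        obtain ⟨hn, hgn⟩ := Nat.find_spec (hPex t)
        set n := Nat.find (hPex t)
        have hφs : phiStar φ ((e n).1) ≤ -(e n).2 := by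
          apply phiStar_le
          intro u hu
          have := heL n u hu
          linarith
        have hHt : H t = (e n).1 := rfl
        rw [hHt, hgn]
        simp only [hℓdef]
        linarith
      set h : Espc d → ℝ := fun x => H (ρ x) with hhdef
      have hhmeas : Measurable h := hHmeas.comp hρmeas
      have hhabs : ∀ x, |h x| ≤ K := fun x => hHabs (ρ x)
      -- dual value of the step function
      have hint_h : Integrable h (ν : Measure (Espc d)) := by
        refine (integrable_const K).mono' hhmeas.aestronglyMeasurable
          (ae_of_all _ fun x => ?_)
        rw [Real.norm_eq_abs]; exact hhabs x
      have hint_hρ : Integrable (fun x => ρ x * h x) γ := by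
        have := hρint.bdd_mul (c := K) hhmeas.aestronglyMeasurable
          (ae_of_all _ fun x => by rw [Real.norm_eq_abs]; exact hhabs x)
        exact this.congr (ae_of_all _ fun x => by ring)
      have hint_φh : Integrable (fun x => phiStar φ (h x)) γ :=
        hφsint γ h hhmeas.aestronglyMeasurable K hKnn hhabs
      have hνint : ∫ x, h x ∂(ν : Measure (Espc d)) = ∫ x, ρ x * h x ∂γ := by
        haveI := Measure.haveLebesgueDecomposition_of_sigmaFinite (μ := (ν : Measure (Espc d))) (ν := γ)
        rw [← MeasureTheory.integral_rnDeriv_smul hac]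
        apply integral_congr_ae (ae_of_all _ fun x => ?_)
        simp [smul_eq_mul, hρdef]
      have hstep1 : I ≤ (∫ x, h x ∂(ν : Measure (Espc d))) - ∫ x, phiStar φ (h x) ∂γ := by
        rw [hνint, ← integral_sub hint_hρ hint_φh]
        apply integral_mono hgρint (hint_hρ.sub hint_φh)
        intro x
        have := hHkey (ρ x) (hρnn x)
        show g N (ρ x) ≤ ρ x * h x - phiStar φ (h x)
        have hhx : h x = H (ρ x) := rfl
        rw [hhx]
        nlinarith [this]
      -- Lipschitz constant of phiStar on [-K, K]
      set M : ℝ := max |phiStar φ (K+2) - phiStar φ (K+1)|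
        |phiStar φ (-K-1) - phiStar φ (-K-2)| with hMdef
      have hMnn : 0 ≤ M := le_trans (abs_nonneg _) (le_max_left _ _)
      -- it suffices to approximate up to ε
      have hεstep : ∀ ε : ℝ, 0 < ε → ∃ f : Espc d →ᵇ ℝ, ENNReal.ofReal (I - ε) ≤ G f ν := by
        intro ε hε
        set ε' := ε / (M + 2) with hε'def
        have hε'pos : 0 < ε' := div_pos hε (by linarith)
        set m : Measure (Espc d) := γ + (ν : Measure (Espc d)) with hmdef
        have hmfin : IsFiniteMeasure m := by rw [hmdef]; infer_instance
        have hγm : γ ≤ m := Measure.le_add_right le_rfl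
        have hνm : (ν : Measure (Espc d)) ≤ m := Measure.le_add_left le_rfl
        have hint_hm : Integrable h m := by
          refine (integrable_const K).mono' hhmeas.aestronglyMeasurable
            (ae_of_all _ fun x => ?_)
          rw [Real.norm_eq_abs]; exact hhabs x
        obtain ⟨g₀, hg₀supp, hg₀close, hg₀cont, hg₀int⟩ :=
          hint_hm.exists_hasCompactSupport_integral_sub_le hε'pos
        -- truncation to [-K, K]
        set f₁ : Espc d → ℝ := fun x => max (-K) (min (g₀ x) K) with hf₁def
        have hf₁cont : Continuous f₁ := continuous_const.max (hg₀cont.min continuous_const)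
        have hf₁abs : ∀ x, |f₁ x| ≤ K := by
          intro x
          rw [abs_le]
          exact ⟨le_max_left _ _, max_le (by linarith) (min_le_right _ _)⟩
        have htrunc : ∀ x, |f₁ x - h x| ≤ |g₀ x - h x| := by
          intro x
          obtain ⟨hh1, hh2⟩ := abs_le.1 (hhabs x)
          rcases le_total (g₀ x) (-K) with h1 | h1
          · have hfx : f₁ x = -K := by
              rw [hf₁def]
              simp only []
              rw [min_eq_left (by linarith), max_eq_left (by linarith)]
            rw [hfx, abs_of_nonpos (by linarith), abs_of_nonpos (by linarith)]
            linarith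
          · rcases le_total K (g₀ x) with h2 | h2
            · have hfx : f₁ x = K := by
                rw [hf₁def]
                simp only []
                rw [min_eq_right h2, max_eq_right (by linarith)]
              rw [hfx, abs_of_nonneg (by linarith), abs_of_nonneg (by linarith)]
              linarith
            · have hfx : f₁ x = g₀ x := by
                rw [hf₁def]
                simp only []
                rw [min_eq_left h2, max_eq_right h1]
              rw [hfx]
        set fb : Espc d →ᵇ ℝ := BoundedContinuousFunction.ofNormedAddCommGroup f₁ hf₁cont K
          (fun x => by rw [Real.norm_eq_abs]; exact hf₁abs x) with hfbdef
        have hfbval : ∀ x, fb x = f₁ x := fun x => rfl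
        -- integrability facts
        have hint_f₁γ : Integrable f₁ γ :=
          (integrable_const K).mono' hf₁cont.aestronglyMeasurable
            (ae_of_all _ fun x => by rw [Real.norm_eq_abs]; exact hf₁abs x)
        have hint_f₁ν : Integrable f₁ (ν : Measure (Espc d)) :=
          (integrable_const K).mono' hf₁cont.aestronglyMeasurable
            (ae_of_all _ fun x => by rw [Real.norm_eq_abs]; exact hf₁abs x)
        have hint_f₁m : Integrable f₁ m :=
          (integrable_const K).mono' hf₁cont.aestronglyMeasurable
            (ae_of_all _ fun x => by rw [Real.norm_eq_abs]; exact hf₁abs x)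
        have hint_hγ : Integrable h γ := by
          refine (integrable_const K).mono' hhmeas.aestronglyMeasurable
            (ae_of_all _ fun x => ?_)
          rw [Real.norm_eq_abs]; exact hhabs x
        have hdiffm : Integrable (fun x => |f₁ x - h x|) m := (hint_f₁m.sub hint_hm).abs
        -- L¹ estimates
        have hL1m : ∫ x, |f₁ x - h x| ∂m ≤ ε' := by
          have hptw : ∀ x, |f₁ x - h x| ≤ ‖h x - g₀ x‖ := by
            intro x
            rw [Real.norm_eq_abs, abs_sub_comm (h x) (g₀ x)]
            exact htrunc x
          calc ∫ x, |f₁ x - h x| ∂m ≤ ∫ x, ‖h x - g₀ x‖ ∂m :=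
                integral_mono hdiffm (hint_hm.sub hg₀int).norm hptw
          _ ≤ ε' := hg₀close
        have hL1γ : ∫ x, |f₁ x - h x| ∂γ ≤ ε' :=
          le_trans (integral_mono_measure hγm (ae_of_all _ fun x => abs_nonneg _) hdiffm) hL1m
        have hL1ν : ∫ x, |f₁ x - h x| ∂(ν : Measure (Espc d)) ≤ ε' :=
          le_trans (integral_mono_measure hνm (ae_of_all _ fun x => abs_nonneg _) hdiffm) hL1m
        -- comparison of the two dual values
        have hc1 : ∫ x, h x ∂(ν : Measure (Espc d)) - ε'
            ≤ ∫ x, fb x ∂(ν : Measure (Espc d)) := by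
          have h3 : ∫ x, f₁ x ∂(ν : Measure (Espc d)) - ∫ x, h x ∂(ν : Measure (Espc d))
              = ∫ x, (f₁ x - h x) ∂(ν : Measure (Espc d)) :=
            (integral_sub hint_f₁ν hint_h).symm
          have h4 : |∫ x, (f₁ x - h x) ∂(ν : Measure (Espc d))|
              ≤ ∫ x, |f₁ x - h x| ∂(ν : Measure (Espc d)) := by
            simpa [Real.norm_eq_abs] using
              norm_integral_le_integral_norm (μ := (ν : Measure (Espc d)))
                (fun x => f₁ x - h x)
          have h5 := abs_le.1 (h4.trans hL1ν)
          have h6 : ∫ x, fb x ∂(ν : Measure (Espc d)) = ∫ x, f₁ x ∂(ν : Measure (Espc d)) :=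
            integral_congr_ae (ae_of_all _ fun x => hfbval x)
          rw [h6]
          linarith [h5.1, h3]
        have hint_φf₁ : Integrable (fun x => phiStar φ (f₁ x)) γ :=
          hφsint γ f₁ hf₁cont.aestronglyMeasurable K hKnn hf₁abs
        have hc2 : ∫ x, phiStar φ (fb x) ∂γ ≤ (∫ x, phiStar φ (h x) ∂γ) + M * ε' := by
          have hptw : ∀ x, phiStar φ (f₁ x) - phiStar φ (h x) ≤ M * |f₁ x - h x| := by
            intro x
            have hmem1 : h x ∈ Icc (-K) K := abs_le.1 (hhabs x)
            have hmem2 : f₁ x ∈ Icc (-K) K := abs_le.1 (hf₁abs x)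
            have := convexOn_abs_sub_le (phiStar_convexOn hφnn hφsuper) hmem1 hmem2
            calc phiStar φ (f₁ x) - phiStar φ (h x)
                ≤ |phiStar φ (f₁ x) - phiStar φ (h x)| := le_abs_self _
            _ ≤ M * |f₁ x - h x| := this
          have h3 : ∫ x, (phiStar φ (f₁ x) - phiStar φ (h x)) ∂γ
              ≤ ∫ x, M * |f₁ x - h x| ∂γ := by
            apply integral_mono (hint_φf₁.sub hint_φh)
              (((hint_f₁γ.sub hint_hγ).abs).const_mul M) hptw
          rw [integral_sub hint_φf₁ hint_φh, integral_const_mul] at h3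
          have h7 : ∫ x, phiStar φ (fb x) ∂γ = ∫ x, phiStar φ (f₁ x) ∂γ :=
            integral_congr_ae (ae_of_all _ fun x => by show phiStar φ (fb x) = phiStar φ (f₁ x); rw [hfbval x])
          rw [h7]
          have h8 : M * ∫ x, |f₁ x - h x| ∂γ ≤ M * ε' :=
            mul_le_mul_of_nonneg_left hL1γ hMnn
          linarith
        -- conclusion of the ε-step
        have hε'bound : (M + 1) * ε' ≤ ε := by
          rw [hε'def]
          rw [mul_div_assoc']
          rw [div_le_iff₀ (by linarith : (0:ℝ) < M + 2)]
          nlinarith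
        have hfinal : I - ε ≤ (∫ x, fb x ∂(ν : Measure (Espc d)))
            - ∫ x, phiStar φ (fb x) ∂γ := by
          have := hstep1
          nlinarith [hc1, hc2, hε'bound]
        exact ⟨fb, by simpa only [hGdef] using ENNReal.ofReal_le_ofReal hfinal⟩
      -- ε-argument in ℝ≥0∞
      apply ENNReal.le_of_forall_pos_le_add
      intro εn hεn _
      obtain ⟨f, hf⟩ := hεstep εn (by exact_mod_cast hεn)
      calc ENNReal.ofReal I = ENNReal.ofReal ((I - εn) + εn) := by rw [sub_add_cancel]
      _ ≤ ENNReal.ofReal (I - εn) + ENNReal.ofReal εn := ENNReal.ofReal_add_le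
      _ ≤ (⨆ f, G f ν) + εn := by
            apply add_le_add
            · exact le_trans hf (le_iSup (fun f => G f ν) f)
            · rw [ENNReal.ofReal_coe_nnreal]
    · -- ν is not absolutely continuous : the supremum is ⊤
      have hex : ∃ s, γ s = 0 ∧ (ν : Measure (Espc d)) s ≠ 0 := by
        by_contra h
        push_neg at h
        exact hac (Measure.AbsolutelyContinuous.mk fun s _ h0 => h s h0)
      obtain ⟨s, hs0, hsν⟩ := hex
      set A := toMeasurable γ s with hAdef
      have hAmeas : MeasurableSet A := measurableSet_toMeasurable γ s
      have hA0 : γ A = 0 := by rw [hAdef, measure_toMeasurable]; exact hs0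
      have hAν : (ν : Measure (Espc d)) A ≠ 0 := fun h =>
        hsν (measure_mono_null (subset_toMeasurable γ s) h)
      have hfin : (ν : Measure (Espc d)) A ≠ ∞ := measure_ne_top _ _
      obtain ⟨K, hKA, hKcomp, hKν⟩ := hAmeas.exists_isCompact_lt_add hfin
        (ENNReal.div_ne_zero.2 ⟨hAν, (ENNReal.ofNat_ne_top : (2:ℝ≥0∞) ≠ ∞)⟩)
      have hνKhalf : (ν : Measure (Espc d)) A / 2 ≤ (ν : Measure (Espc d)) K := by
        by_contra hlt
        push_neg at hlt
        have h2 := hKν.trans_le (add_le_add hlt.le le_rfl)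
        rw [ENNReal.add_halves] at h2
        exact lt_irrefl _ h2
      have hνK0 : (ν : Measure (Espc d)) K ≠ 0 := by
        intro h
        rw [h, le_zero_iff] at hνKhalf
        exact hAν ((ENNReal.div_eq_zero_iff.1 hνKhalf).resolve_right (ENNReal.ofNat_ne_top : (2:ℝ≥0∞) ≠ ∞))
      set δ := ((ν : Measure (Espc d)) K).toReal with hδdef
      have hδpos : 0 < δ := ENNReal.toReal_pos hνK0 (measure_ne_top _ _)
      have hγK : γ K = 0 := measure_mono_null hKA hA0
      -- for every n, a test function with large dual value
      have hstep : ∀ n : ℕ, ∃ fb : Espc d →ᵇ ℝ,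
          ENNReal.ofReal ((n : ℝ) * δ - 1) ≤ G fb ν := by
        intro n
        set Cn := max (phiStar φ (n : ℝ)) 0 with hCn
        have hCnn : 0 ≤ Cn := le_max_right _ _
        have hγKlt : γ K < ENNReal.ofReal (1 / (Cn + 1)) := by
          rw [hγK]
          exact ENNReal.ofReal_pos.2 (by positivity)
        obtain ⟨U, hUK, hUopen, hUsmall⟩ := Set.exists_isOpen_lt_of_lt K _ hγKlt
        obtain ⟨f₀, hf₀0, hf₀1, hf₀range⟩ := exists_continuous_zero_one_of_isClosed
          hUopen.isClosed_compl hKcomp.isClosed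
          (Set.disjoint_left.2 fun x hxU hxK => hxU (hUK hxK))
        have hbnd : ∀ x, ‖(n : ℝ) * f₀ x‖ ≤ (n : ℝ) := by
          intro x
          have hn0 : (0:ℝ) ≤ (n:ℝ) := Nat.cast_nonneg n
          rw [Real.norm_eq_abs, abs_mul, abs_of_nonneg hn0]
          have h1 := (hf₀range x).1
          have h2 := (hf₀range x).2
          have habs : |f₀ x| ≤ 1 := abs_le.2 ⟨by linarith, by linarith⟩
          nlinarith
        set fb : Espc d →ᵇ ℝ := BoundedContinuousFunction.ofNormedAddCommGroup
          (fun x => (n : ℝ) * f₀ x) (continuous_const.mul f₀.continuous) n hbnd with hfbdef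
        have hfbval : ∀ x, fb x = (n : ℝ) * f₀ x := fun x => rfl
        have hfbabs : ∀ x, |fb x| ≤ (n : ℝ) := fun x => by
          rw [hfbval, ← Real.norm_eq_abs]; exact hbnd x
        have hfbnn : ∀ x, 0 ≤ fb x := fun x => by
          rw [hfbval]
          exact mul_nonneg (Nat.cast_nonneg n) (hf₀range x).1
        have hfbint : Integrable fb (ν : Measure (Espc d)) := fb.integrable _
        -- lower bound on ∫ fb dν
        have hlow : (n : ℝ) * δ ≤ ∫ x, fb x ∂(ν : Measure (Espc d)) := by
          have h1 : ∫ x in K, fb x ∂(ν : Measure (Espc d)) = (n : ℝ) * δ := by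
            rw [setIntegral_congr_fun hKcomp.measurableSet
              (fun x hx => by
                have h1 := hf₀1 hx
                simp only [Pi.one_apply] at h1
                show fb x = (n:ℝ)
                rw [hfbval, h1, mul_one] : EqOn (fun x => fb x) (fun _ => (n:ℝ)) K)]
            rw [setIntegral_const, smul_eq_mul, hδdef, measureReal_def]
            ring
          rw [← h1]
          exact setIntegral_le_integral hfbint (ae_of_all _ hfbnn)
        -- upper bound on ∫ phiStar(fb) dγ
        have hφsfb : Integrable (fun x => phiStar φ (fb x)) γ :=
          hφsint γ (fun x => fb x) fb.continuous.aestronglyMeasurable n (Nat.cast_nonneg n)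
            hfbabs
        have hup : ∫ x, phiStar φ (fb x) ∂γ ≤ 1 := by
          have hpt : ∀ x, phiStar φ (fb x) ≤ U.indicator (fun _ => Cn) x := by
            intro x
            by_cases hx : x ∈ U
            · rw [Set.indicator_of_mem hx]
              have hle : fb x ≤ (n : ℝ) := by
                rw [hfbval]
                have hn0 : (0:ℝ) ≤ (n:ℝ) := Nat.cast_nonneg n
                nlinarith [(hf₀range x).2]
              exact le_trans (phiStar_mono hφnn hφsuper hle) (le_max_left _ _)
            · rw [Set.indicator_of_notMem hx]
              have : f₀ x = 0 := hf₀0 hx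
              rw [hfbval, this, mul_zero]
              exact phiStar_zero_nonpos hφnn
          have hind : Integrable (U.indicator (fun _ => Cn)) γ :=
            (integrable_const Cn).indicator hUopen.measurableSet
          calc ∫ x, phiStar φ (fb x) ∂γ ≤ ∫ x, U.indicator (fun _ => Cn) x ∂γ :=
                integral_mono hφsfb hind hpt
          _ = (γ U).toReal • Cn := integral_indicator_const Cn hUopen.measurableSet
          _ ≤ (1 / (Cn + 1)) * Cn := by
                rw [smul_eq_mul]
                apply mul_le_mul_of_nonneg_right _ hCnn
                exact ENNReal.toReal_le_of_le_ofReal (by positivity) hUsmall.le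
          _ ≤ 1 := by
                rw [div_mul_eq_mul_div, one_mul, div_le_one (by positivity)]
                linarith
        -- conclusion
        have hval : (n : ℝ) * δ - 1 ≤ (∫ x, fb x ∂(ν : Measure (Espc d)))
            - ∫ x, phiStar φ (fb x) ∂γ := by linarith
        exact ⟨fb, by simpa only [hGdef] using ENNReal.ofReal_le_ofReal hval⟩
      -- conclude ⊤ ≤ ⨆
      rw [top_le_iff, iSup_eq_top]
      intro b hb
      obtain ⟨n, hn⟩ := exists_nat_gt ((b.toReal + 2) / δ)
      have hnδ : b.toReal + 2 ≤ (n : ℝ) * δ := by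
        rw [div_lt_iff₀ hδpos] at hn
        linarith
      obtain ⟨fb, hfb⟩ := hstep n
      refine ⟨fb, lt_of_lt_of_le ?_ hfb⟩
      calc b = ENNReal.ofReal b.toReal := (ENNReal.ofReal_toReal hb.ne).symm
      _ < ENNReal.ofReal ((n : ℝ) * δ - 1) := by
          rw [ENNReal.ofReal_lt_ofReal_iff (by linarith [ENNReal.toReal_nonneg (a := b)])]
          linarith [ENNReal.toReal_nonneg (a := b)]

  · -- easy direction : ⨆ f, G f ν ≤ F ν
    apply iSup_le
    intro f
    split_ifs with hac
    · -- Fenchel–Young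
      have hint1 : ∫ x, f x ∂(ν : Measure (Espc d)) = ∫ x, ρ x * f x ∂γ := by
        haveI := Measure.haveLebesgueDecomposition_of_sigmaFinite (μ := (ν : Measure (Espc d))) (ν := γ)
        rw [← MeasureTheory.integral_rnDeriv_smul hac]
        simp [smul_eq_mul, hρdef]
      have hfρint : Integrable (fun x => ρ x * f x) γ :=
        hρint.bdd_mul (c := ‖f‖) f.continuous.aestronglyMeasurable
          (ae_of_all _ fun x => f.norm_coe_le_norm x) |>.congr (ae_of_all _ fun x => by ring)
      have hφsfint : Integrable (fun x => phiStar φ (f x)) γ :=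
        hφsint γ (fun x => f x) f.continuous.aestronglyMeasurable ‖f‖ (norm_nonneg f)
          (fun x => by simpa [Real.norm_eq_abs] using f.norm_coe_le_norm x)
      set w : Espc d → ℝ := fun x => ρ x * f x - phiStar φ (f x) with hwdef
      have hwint : Integrable w γ := hfρint.sub hφsfint
      have hwle : ∀ x, w x ≤ φ (ρ x) := by
        intro x
        have := phiStar_ge hφnn hφsuper (f x) (hρnn x)
        simp only [hwdef]
        linarith
      calc G f ν = ENNReal.ofReal (∫ x, w x ∂γ) := by
            simp only [hGdef, hint1, hwdef]
            rw [integral_sub hfρint hφsfint]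
      _ ≤ ENNReal.ofReal (∫ x, max (w x) 0 ∂γ) := by
            apply ENNReal.ofReal_le_ofReal
            exact integral_mono hwint hwint.pos_part (fun x => le_max_left _ _)
      _ = ∫⁻ x, ENNReal.ofReal (max (w x) 0) ∂γ :=
            ofReal_integral_eq_lintegral_ofReal hwint.pos_part
              (ae_of_all _ fun x => le_max_right _ _)
      _ ≤ ∫⁻ x, ENNReal.ofReal (φ (ρ x)) ∂γ := by
            apply lintegral_mono
            intro x
            apply ENNReal.ofReal_le_ofReal
            exact max_le (hwle x) (hφnn _ (hρnn x))
    · exact le_top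
end
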